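/- For all integers i ≥ 0 and j with 0 ≤ j ≤ q−1 satisfying qi + (q+1)j ≤ q(s+q) − 2, the sum over all (a,b) ∈ S of a^i·b^j equals 0 in 𝔽_{q²}. -/
import Mathlib
open Finset



lemma aux_zeta (F : Type*) [Field F] [Fintype F] {d : ℕ}
    (hdvd : d ∣ Fintype.card F - 1) :
    ∃ ζ : F, ζ ≠ 0 ∧ ∀ m : ℕ, ζ ^ m = 1 ↔ d ∣ m := by
  classical
  obtain ⟨g, hg⟩ := IsCyclic.exists_generator (α := Fˣ)
  have hord : orderOf g = Fintype.card F - 1 := by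
    rw [orderOf_eq_card_of_forall_mem_zpowers hg, Nat.card_eq_fintype_card,
      Fintype.card_units]
  set N := Fintype.card F - 1 with hN
  have hN0 : N ≠ 0 := by
    have : 1 < Fintype.card F := Fintype.one_lt_card
    omega
  have hdvd' : N / d ∣ N := Nat.div_dvd_of_dvd hdvd
  have hord2 : orderOf (g ^ (N / d)) = d := by
    rw [orderOf_pow, hord, Nat.gcd_eq_right hdvd', Nat.div_div_self hdvd hN0]
  refine ⟨((g ^ (N / d) : Fˣ) : F), Units.ne_zero _, fun m => ?_⟩
  rw [← Units.val_pow_eq_pow_val, ← Units.val_one (α := F), ← Units.ext_iff,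
    ← orderOf_dvd_iff_pow_eq_one, hord2]

lemma aux_card (F : Type*) [Field F] [Fintype F] [DecidableEq F] {d : ℕ} (hd : 0 < d)
    (hdvd : d ∣ Fintype.card F - 1) :
    (univ.filter (fun x : F => x ^ d = 1)).card = d := by
  obtain ⟨ζ, hζ0, hζ⟩ := aux_zeta F hdvd
  apply le_antisymm
  · calc (univ.filter (fun x : F => x ^ d = 1)).card
        ≤ (Polynomial.nthRoots d (1 : F)).toFinset.card := by
          apply Finset.card_le_card
          intro x hx
          simp only [mem_filter] at hx
          simpa [Multiset.mem_toFinset, Polynomial.mem_nthRoots hd] using hx.2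
      _ ≤ Multiset.card (Polynomial.nthRoots d (1 : F)) := Multiset.toFinset_card_le _
      _ ≤ d := Polynomial.card_nthRoots d 1
  · have key : ∀ a b : ℕ, a < d → b < d → a ≤ b → ζ ^ a = ζ ^ b → a = b := by
      intro a b ha hb hab' hab
      by_contra hne
      have h1 : ζ ^ b = ζ ^ a * ζ ^ (b - a) := by
        rw [← pow_add]; congr 1; omega
      have h2 : ζ ^ (b - a) = 1 := by
        apply mul_left_cancel₀ (pow_ne_zero a hζ0)
        rw [← h1, ← hab, mul_one]
      have := Nat.le_of_dvd (by omega) ((hζ _).1 h2)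
      omega
    have hinj : Set.InjOn (fun m => ζ ^ m) (Finset.range d) := by
      intro a ha b hb hab
      simp only [coe_range, Set.mem_Iio] at ha hb
      simp only at hab
      rcases le_total a b with h | h
      · exact key a b ha hb h hab
      · exact (key b a hb ha h hab.symm).symm
    calc d = (Finset.range d).card := (card_range d).symm
      _ = ((Finset.range d).image (fun m => ζ ^ m)).card := (Finset.card_image_of_injOn hinj).symm
      _ ≤ (univ.filter (fun x : F => x ^ d = 1)).card := by
          apply Finset.card_le_card
          intro x hx
          simp only [mem_image, mem_range] at hx
          obtain ⟨m, hm, rfl⟩ := hx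
          simp only [mem_filter, mem_univ, true_and, ← pow_mul]
          exact (hζ _).2 (dvd_mul_left d m)

lemma aux_sum (F : Type*) [Field F] [Fintype F] [DecidableEq F] {d m : ℕ}
    (hdvd : d ∣ Fintype.card F - 1) (hm : ¬ d ∣ m) :
    ∑ x ∈ univ.filter (fun x : F => x ^ d = 1), x ^ m = 0 := by
  obtain ⟨ζ, hζ0, hζ⟩ := aux_zeta F hdvd
  have hζd : ζ ^ d = 1 := (hζ d).2 dvd_rfl
  have key : ∑ x ∈ univ.filter (fun x : F => x ^ d = 1), x ^ m
      = ∑ x ∈ univ.filter (fun x : F => x ^ d = 1), (ζ * x) ^ m := by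
    apply Finset.sum_nbij' (fun x => ζ⁻¹ * x) (fun x => ζ * x)
    · intro x hx
      simp only [mem_filter, mem_univ, true_and] at hx ⊢
      rw [mul_pow, hx, mul_one, inv_pow, hζd, inv_one]
    · intro x hx
      simp only [mem_filter, mem_univ, true_and] at hx ⊢
      rw [mul_pow, hx, mul_one, hζd]
    · intro x _; field_simp
    · intro x _; field_simp
    · intro x _
      rw [← mul_assoc, mul_inv_cancel₀ hζ0, one_mul]
  have : (1 - ζ ^ m) * ∑ x ∈ univ.filter (fun x : F => x ^ d = 1), x ^ m = 0 := by
    rw [sub_mul, one_mul, sub_eq_zero]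
    conv_lhs => rw [key]
    rw [Finset.mul_sum]
    exact Finset.sum_congr rfl fun x _ => by rw [mul_pow]
  rcases mul_eq_zero.1 this with h | h
  · exact absurd ((hζ m).1 (sub_eq_zero.1 h).symm) hm
  · exact h

lemma aux_char (p t q : ℕ) (hp : p.Prime) (ht : 1 ≤ t) (hq : q = p ^ t)
    (F : Type*) [Field F] [Fintype F] (hF : Fintype.card F = q ^ 2) : CharP F p := by
  have h1 : CharP F (ringChar F) := ringChar.charP F
  obtain ⟨n, hprime, hcard⟩ := FiniteField.card F (ringChar F)
  have h2 : ringChar F ∣ p := by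
    apply hprime.dvd_of_dvd_pow (n := t * 2)
    have : ringChar F ∣ ringChar F ^ (n : ℕ) := dvd_pow_self _ n.ne_zero
    rw [← hcard, hF, hq, ← pow_mul] at this
    exact this
  have h3 : ringChar F = p := (Nat.prime_dvd_prime_iff_eq hprime hp).1 h2
  rwa [h3] at h1

lemma aux_sq (q : ℕ) (hq : 1 ≤ q) : (q + 1) * (q - 1) + 1 = q ^ 2 := by
  obtain ⟨u, rfl⟩ := Nat.exists_eq_add_of_le hq
  simp only [Nat.add_sub_cancel_left]
  ring_nf

lemma aux_k0 (p t q : ℕ) (hp : p.Prime) (ht : 1 ≤ t) (hq : q = p ^ t)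
    (F : Type*) [Field F] [Fintype F] (hF : Fintype.card F = q ^ 2) :
    ∃ k0 : F, k0 ≠ 0 ∧ k0 ^ (q - 1) = -1 := by
  classical
  have hq2 : 2 ≤ q := by
    have := Nat.one_lt_pow (by omega : t ≠ 0) hp.one_lt
    omega
  by_cases hneg : (-1 : F) = 1
  · exact ⟨1, one_ne_zero, by rw [one_pow, hneg]⟩
  -- p odd, hence q odd
  have hchar : CharP F p := aux_char p t q hp ht hq F hF
  have hpodd : p ≠ 2 := by
    intro h2
    apply hneg
    have : (2 : F) = 0 := by
      have := CharP.cast_eq_zero F p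
      rwa [h2] at this
    linear_combination -this
  have hqodd : ¬ 2 ∣ q := by
    rw [hq]
    intro hdvd
    have h2p : (2 : ℕ) ∣ p := Nat.Prime.dvd_of_dvd_pow Nat.prime_two hdvd
    exact hpodd ((Nat.prime_dvd_prime_iff_eq Nat.prime_two hp).1 h2p).symm
  obtain ⟨g, hg⟩ := IsCyclic.exists_generator (α := Fˣ)
  have hord : orderOf g = q ^ 2 - 1 := by
    rw [orderOf_eq_card_of_forall_mem_zpowers hg, Nat.card_eq_fintype_card,
      Fintype.card_units, hF]
  set N := q ^ 2 - 1 with hN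
  have hNeven : 2 ∣ N := by
    have : ¬ 2 ∣ q ^ 2 := by
      intro h
      exact hqodd (Nat.Prime.dvd_of_dvd_pow Nat.prime_two h)
    omega
  have hN3 : 3 ≤ N := by
    have h4 : 4 ≤ q ^ 2 := by nlinarith
    omega
  -- h := g ^ (N / 2) has square 1 and is not 1
  have hsq : ((g : F) ^ (N / 2)) ^ 2 = 1 := by
    rw [← pow_mul, Nat.div_mul_cancel hNeven, ← Units.val_pow_eq_pow_val,
      ← Units.val_one (α := F), ← Units.ext_iff, ← orderOf_dvd_iff_pow_eq_one, hord]
  have hne1 : (g : F) ^ (N / 2) ≠ 1 := by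
    rw [← Units.val_pow_eq_pow_val, ← Units.val_one (α := F), Ne, ← Units.ext_iff,
      ← orderOf_dvd_iff_pow_eq_one, hord]
    intro hdvd
    have := Nat.le_of_dvd (by omega) hdvd
    omega
  have hval : (g : F) ^ (N / 2) = -1 := by
    have h0 : ((g : F) ^ (N / 2) - 1) * ((g : F) ^ (N / 2) + 1) = 0 := by
      ring_nf
      linear_combination hsq
    rcases mul_eq_zero.1 h0 with h | h
    · exact absurd (by linear_combination h) hne1
    · linear_combination h
  -- k0 := g ^ ((q+1)/2)
  obtain ⟨r, hr⟩ : 2 ∣ q + 1 := by omega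
  refine ⟨(g : F) ^ r, pow_ne_zero _ (Units.ne_zero g), ?_⟩
  have harith : r * (q - 1) = N / 2 := by
    have h1 : (q + 1) * (q - 1) + 1 = q ^ 2 := aux_sq q (by omega)
    have h3 : (q + 1) * (q - 1) = 2 * (r * (q - 1)) := by rw [hr]; ring
    omega
  rw [← pow_mul, harith, hval]
section
variable (F : Type*) [Field F] [Fintype F] [DecidableEq F] (q : ℕ)

-- decomposition of the kernel K = {k | k^q + k = 0}
lemma aux_Kset (hq2 : 2 ≤ q) {k0 : F} (hk00 : k0 ≠ 0) (hk0 : k0 ^ (q - 1) = -1) :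
    univ.filter (fun k : F => k ^ q + k = 0)
      = insert (0 : F) ((univ.filter (fun u : F => u ^ (q - 1) = 1)).image (fun u => k0 * u)) := by
  ext k
  simp only [mem_filter, mem_univ, true_and, mem_insert, mem_image]
  constructor
  · intro hk
    by_cases hk0' : k = 0
    · exact Or.inl hk0'
    · refine Or.inr ⟨k0⁻¹ * k, ?_, ?_⟩
      · have hkq : k ^ (q - 1) * k = k ^ q := by
          rw [← pow_succ]
          congr 1
          omega
        have hk1 : k ^ (q - 1) = -1 := by
          apply mul_right_cancel₀ hk0'
          rw [hkq, eq_neg_of_add_eq_zero_left hk]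
          ring
        rw [mul_pow, inv_pow, hk0, hk1]
        norm_num
      · rw [← mul_assoc, mul_inv_cancel₀ hk00, one_mul]
  · rintro (rfl | ⟨u, hu, rfl⟩)
    · rw [zero_pow (by omega), add_zero]
    · have h1 : (k0 * u) ^ (q - 1) = -1 := by
        rw [mul_pow, hk0, hu, mul_one]
      have h2 : (k0 * u) ^ q = (k0 * u) ^ (q - 1) * (k0 * u) := by
        rw [← pow_succ]
        congr 1
        omega
      rw [h2, h1]
      ring

lemma aux_Ksum (hq2 : 2 ≤ q) (hF : Fintype.card F = q ^ 2) (hqF : (q : F) = 0)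
    {k0 : F} (hk00 : k0 ≠ 0) (hk0 : k0 ^ (q - 1) = -1) {m : ℕ} (hm : m ≤ q - 1) :
    ∑ k ∈ univ.filter (fun k : F => k ^ q + k = 0), k ^ m
      = if m = q - 1 then 1 else 0 := by
  have hq1dvd : q - 1 ∣ Fintype.card F - 1 := by
    have h1 : (q + 1) * (q - 1) + 1 = q ^ 2 := aux_sq q (by omega)
    refine ⟨q + 1, ?_⟩
    rw [hF]
    have : (q - 1) * (q + 1) = (q + 1) * (q - 1) := mul_comm _ _
    omega
  have h0notin : (0 : F) ∉ (univ.filter (fun u : F => u ^ (q - 1) = 1)).image (fun u => k0 * u) := by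
    simp only [mem_image, mem_filter, mem_univ, true_and, not_exists]
    rintro u ⟨hu, hu0⟩
    have : u ≠ 0 := by
      intro h; rw [h, zero_pow (by omega)] at hu; exact zero_ne_one hu
    exact (mul_ne_zero hk00 this) hu0
  rw [aux_Kset F q hq2 hk00 hk0, Finset.sum_insert h0notin,
    Finset.sum_image (fun a _ b _ h => mul_left_cancel₀ hk00 h)]
  have hcardM : (univ.filter (fun u : F => u ^ (q - 1) = 1)).card = q - 1 :=
    aux_card F (by omega) hq1dvd
  have h1 : ((q - 1 : ℕ) : F) = -1 := by
    rw [Nat.cast_sub (by omega : 1 ≤ q), hqF]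
    norm_num
  rcases Nat.eq_zero_or_pos m with rfl | hmpos
  · -- m = 0 : sum of ones = card = q = 0
    rw [if_neg (by omega)]
    simp only [pow_zero, Finset.sum_const, nsmul_one, hcardM]
    rw [h1]
    ring
  · rw [zero_pow (by omega), zero_add]
    by_cases hmeq : m = q - 1
    · rw [if_pos hmeq, hmeq]
      have : ∀ u ∈ univ.filter (fun u : F => u ^ (q - 1) = 1),
          (k0 * u) ^ (q - 1) = -1 := by
        intro u hu
        simp only [mem_filter, mem_univ, true_and] at hu
        rw [mul_pow, hk0, hu, mul_one]
      rw [Finset.sum_congr rfl this, Finset.sum_const, hcardM, nsmul_eq_mul, h1]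
      ring
    · rw [if_neg hmeq]
      have hnd : ¬ (q - 1) ∣ m := by
        intro hdvd
        have := Nat.le_of_dvd hmpos hdvd
        omega
      have : ∀ u ∈ univ.filter (fun u : F => u ^ (q - 1) = 1),
          (k0 * u) ^ m = k0 ^ m * u ^ m := fun u _ => mul_pow _ _ _
      rw [Finset.sum_congr rfl this, ← Finset.mul_sum, aux_sum F hq1dvd hnd, mul_zero]

end
section
variable {F : Type*} [Field F] [Fintype F] [DecidableEq F] {p t q : ℕ} [Fact p.Prime]
  [CharP F p]

lemma aux_fiber (hq : q = p ^ t) {b0 c : F} (hb0 : b0 ^ q + b0 = c) :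
    univ.filter (fun b : F => b ^ q + b = c)
      = (univ.filter (fun k : F => k ^ q + k = 0)).image (fun k => b0 + k) := by
  have hadd : ∀ x y : F, (x + y) ^ q = x ^ q + y ^ q := by
    intro x y; rw [hq]; exact add_pow_char_pow ..
  have hsub : ∀ x y : F, (x - y) ^ q = x ^ q - y ^ q := by
    intro x y; rw [hq]; exact sub_pow_char_pow ..
  ext b
  simp only [mem_filter, mem_univ, true_and, mem_image]
  constructor
  · intro hb
    refine ⟨b - b0, ?_, by ring⟩
    rw [hsub]
    linear_combination hb - hb0
  · rintro ⟨k, hk, rfl⟩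
    rw [hadd]
    linear_combination hb0 + hk

lemma aux_surj (hq : q = p ^ t) (hq2 : 2 ≤ q) (hF : Fintype.card F = q ^ 2)
    {k0 : F} (hk00 : k0 ≠ 0) (hk0 : k0 ^ (q - 1) = -1)
    (c : F) (hc : c ^ q = c) : ∃ b0 : F, b0 ^ q + b0 = c := by
  have hq1dvd : q - 1 ∣ Fintype.card F - 1 := by
    have h1 : (q + 1) * (q - 1) + 1 = q ^ 2 := aux_sq q (by omega)
    refine ⟨q + 1, ?_⟩
    rw [hF]
    have : (q - 1) * (q + 1) = (q + 1) * (q - 1) := mul_comm _ _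
    omega
  have hcardM : (univ.filter (fun u : F => u ^ (q - 1) = 1)).card = q - 1 :=
    aux_card F (by omega) hq1dvd
  have h0notinM : ∀ z : F, z ≠ 0 →
      (0 : F) ∉ (univ.filter (fun u : F => u ^ (q - 1) = 1)).image (fun u => z * u) := by
    intro z hz
    simp only [mem_image, mem_filter, mem_univ, true_and, not_exists]
    rintro u ⟨hu, hu0⟩
    have : u ≠ 0 := by
      intro h; rw [h, zero_pow (by omega)] at hu; exact zero_ne_one hu
    exact (mul_ne_zero hz this) hu0
  have hKcard : (univ.filter (fun k : F => k ^ q + k = 0)).card = q := by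
    rw [aux_Kset F q hq2 hk00 hk0, Finset.card_insert_of_notMem (h0notinM k0 hk00),
      Finset.card_image_of_injective _ (mul_right_injective₀ hk00), hcardM]
    omega
  set f := fun b : F => b ^ q + b with hf
  have himsub : univ.image f ⊆ univ.filter (fun x : F => x ^ q = x) := by
    intro x hx
    obtain ⟨b, _, rfl⟩ := mem_image.1 hx
    simp only [mem_filter, mem_univ, true_and, hf]
    have hadd : ∀ x y : F, (x + y) ^ q = x ^ q + y ^ q := by
      intro x y; rw [hq]; exact add_pow_char_pow ..
    have hbq : (b ^ q) ^ q = b := by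
      rw [← pow_mul]
      have hqq : q * q = Fintype.card F := by rw [hF]; ring
      rw [hqq, FiniteField.pow_card]
    rw [hadd, hbq]
    ring
  have hRcard : (univ.filter (fun x : F => x ^ q = x)).card = q := by
    have hReq : univ.filter (fun x : F => x ^ q = x)
        = insert (0 : F) (univ.filter (fun u : F => u ^ (q - 1) = 1)) := by
      ext x
      simp only [mem_filter, mem_univ, true_and, mem_insert]
      constructor
      · intro hx
        by_cases hx0 : x = 0
        · exact Or.inl hx0
        · refine Or.inr ?_
          apply mul_right_cancel₀ hx0
          rw [one_mul, ← pow_succ]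
          have : q - 1 + 1 = q := by omega
          rw [this, hx]
      · rintro (rfl | hx)
        · rw [zero_pow (by omega)]
        · have : x ^ (q - 1) * x = 1 * x := by rw [hx]
          rw [← pow_succ] at this
          have h2 : q - 1 + 1 = q := by omega
          rw [h2, one_mul] at this
          exact this
    rw [hReq, Finset.card_insert_of_notMem, hcardM]
    · omega
    · simp only [mem_filter, mem_univ, true_and]
      rw [zero_pow (by omega : q - 1 ≠ 0)]
      exact zero_ne_one
  have hfibers : ∀ c' ∈ univ.image f, (univ.filter (fun b => f b = c')).card = q := by
    intro c' hc'
    obtain ⟨b0, _, hb0⟩ := mem_image.1 hc'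
    have : univ.filter (fun b => f b = c')
        = (univ.filter (fun k : F => k ^ q + k = 0)).image (fun k => b0 + k) :=
      aux_fiber hq hb0
    rw [this, Finset.card_image_of_injective _ (add_right_injective b0), hKcard]
  have hcount : (univ.image f).card * q = q ^ 2 := by
    have h := Finset.card_eq_sum_card_fiberwise
      (fun x (_ : x ∈ (univ : Finset F)) => mem_image_of_mem f (mem_univ x))
    rw [Finset.card_univ, hF, Finset.sum_congr rfl hfibers, Finset.sum_const,
      smul_eq_mul] at h
    omega
  have himeq : univ.image f = univ.filter (fun x : F => x ^ q = x) := by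
    apply Finset.eq_of_subset_of_card_le himsub
    rw [hRcard]
    have : (univ.image f).card = q := by
      have hq0 : 0 < q := by omega
      have : (univ.image f).card * q = q * q := by rw [hcount]; ring
      exact Nat.eq_of_mul_eq_mul_right hq0 this
    omega
  have : c ∈ univ.image f := by
    rw [himeq]
    simp only [mem_filter, mem_univ, true_and]
    exact hc
  obtain ⟨b0, _, hb0⟩ := mem_image.1 this
  exact ⟨b0, hb0⟩

lemma aux_inner (hq : q = p ^ t) (hq2 : 2 ≤ q) (hF : Fintype.card F = q ^ 2)
    (hqF : (q : F) = 0)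
    {k0 : F} (hk00 : k0 ≠ 0) (hk0 : k0 ^ (q - 1) = -1)
    (c : F) (hc : c ^ q = c) {j : ℕ} (hj : j ≤ q - 1) :
    ∑ b ∈ univ.filter (fun b : F => b ^ q + b = c), b ^ j
      = if j = q - 1 then 1 else 0 := by
  obtain ⟨b0, hb0⟩ := aux_surj hq hq2 hF hk00 hk0 c hc
  rw [aux_fiber hq hb0, Finset.sum_image (fun a _ b _ h => by
    exact add_left_cancel h)]
  have hexp : ∀ k : F, (b0 + k) ^ j
      = ∑ m ∈ Finset.range (j + 1), b0 ^ m * k ^ (j - m) * (j.choose m : F) :=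
    fun k => add_pow b0 k j
  rw [Finset.sum_congr rfl fun k _ => hexp k, Finset.sum_comm]
  have hinner : ∀ m ∈ Finset.range (j + 1),
      ∑ k ∈ univ.filter (fun k : F => k ^ q + k = 0), b0 ^ m * k ^ (j - m) * (j.choose m : F)
      = b0 ^ m * (j.choose m : F) * (if j - m = q - 1 then 1 else 0) := by
    intro m _
    rw [Finset.sum_congr rfl (fun k _ => by ring :
        ∀ k ∈ univ.filter (fun k : F => k ^ q + k = 0),
          b0 ^ m * k ^ (j - m) * (j.choose m : F) = b0 ^ m * (j.choose m : F) * k ^ (j - m)),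
      ← Finset.mul_sum, aux_Ksum F q hq2 hF hqF hk00 hk0 (by omega : j - m ≤ q - 1)]
  rw [Finset.sum_congr rfl hinner]
  by_cases hjq : j = q - 1
  · rw [if_pos hjq]
    rw [Finset.sum_eq_single 0]
    · rw [if_pos (by omega), pow_zero, Nat.choose_zero_right, Nat.cast_one]
      ring
    · intro m hm hm0
      rw [if_neg (by simp only [mem_range] at hm; omega), mul_zero]
    · intro h
      exact absurd (Finset.mem_range.2 (by omega)) h
  · rw [if_neg hjq]
    apply Finset.sum_eq_zero
    intro m hm
    rw [if_neg (by simp only [mem_range] at hm; omega), mul_zero]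

end
theorem stmt_9 (p t q s : ℕ) (hp : p.Prime) (ht : 1 ≤ t) (hq : q = p ^ t)
    (hs : 0 < s) (hsdvd : s ∣ q ^ 2 - 1) (hps : p ∣ s + 1)
    (F : Type*) [Field F] [Fintype F] (hF : Fintype.card F = q ^ 2)
    (S : Finset (F × F))
    (hS : ∀ ab : F × F, ab ∈ S ↔
      (ab.2 ^ q + ab.2 = ab.1 ^ (q + 1) ∧ (ab.1 = 0 ∨ ab.1 ^ s = 1))) :
    ∀ i j : ℕ, j ≤ q - 1 → q * i + (q + 1) * j ≤ q * (s + q) - 2 →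
      ∑ ab ∈ S, ab.1 ^ i * ab.2 ^ j = 0 := by
  classical
  intro i j hj hbound
  haveI : Fact p.Prime := ⟨hp⟩
  haveI hchar : CharP F p := aux_char p t q hp ht hq F hF
  have hq2 : 2 ≤ q := by
    have := Nat.one_lt_pow (by omega : t ≠ 0) hp.one_lt
    omega
  have hpF : (p : F) = 0 := CharP.cast_eq_zero F p
  have hqF : (q : F) = 0 := by
    rw [hq, Nat.cast_pow, hpF, zero_pow (by omega : t ≠ 0)]
  obtain ⟨k0, hk00, hk0⟩ := aux_k0 p t q hp ht hq F hF
  have hSeq : S = univ.filter (fun ab : F × F =>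
      ab.2 ^ q + ab.2 = ab.1 ^ (q + 1) ∧ (ab.1 = 0 ∨ ab.1 ^ s = 1)) := by
    ext ab
    simp [hS ab]
  rw [hSeq, Finset.sum_filter, Fintype.sum_prod_type]
  have hcq : ∀ a : F, (a ^ (q + 1)) ^ q = a ^ (q + 1) := by
    intro a
    rw [← pow_mul]
    have h1 : (q + 1) * q = q ^ 2 + q := by ring
    rw [h1, pow_add]
    have h2 : a ^ (q ^ 2) = a := by rw [← hF, FiniteField.pow_card]
    rw [h2, pow_add, pow_one]
    ring
  have hstep : ∀ a : F,
      (∑ b : F, if b ^ q + b = a ^ (q + 1) ∧ (a = 0 ∨ a ^ s = 1) then a ^ i * b ^ j else 0)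
      = (if a = 0 ∨ a ^ s = 1 then a ^ i * (if j = q - 1 then 1 else 0) else 0) := by
    intro a
    by_cases hPa : a = 0 ∨ a ^ s = 1
    · rw [if_pos hPa]
      have hsimp : ∀ b : F,
          (if b ^ q + b = a ^ (q + 1) ∧ (a = 0 ∨ a ^ s = 1) then a ^ i * b ^ j else 0)
          = (if b ^ q + b = a ^ (q + 1) then a ^ i * b ^ j else 0) := by
        intro b
        by_cases hb : b ^ q + b = a ^ (q + 1) <;> simp [hb, hPa]
      rw [Finset.sum_congr rfl fun b _ => hsimp b, ← Finset.sum_filter, ← Finset.mul_sum,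
        aux_inner hq hq2 hF hqF hk00 hk0 _ (hcq a) hj]
    · rw [if_neg hPa]
      apply Finset.sum_eq_zero
      intro b _
      rw [if_neg (by tauto)]
  rw [Finset.sum_congr rfl fun a _ => hstep a]
  by_cases hjq : j = q - 1
  swap
  · simp [hjq]
  · have hone : ∀ a : F,
        (if a = 0 ∨ a ^ s = 1 then a ^ i * (if j = q - 1 then 1 else 0) else 0)
        = (if a = 0 ∨ a ^ s = 1 then a ^ i else 0) := by
      intro a
      rw [if_pos hjq, mul_one]
    rw [Finset.sum_congr rfl fun a _ => hone a, ← Finset.sum_filter]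
    have hfilter : univ.filter (fun a : F => a = 0 ∨ a ^ s = 1)
        = insert (0 : F) (univ.filter (fun a : F => a ^ s = 1)) := by
      ext a
      simp
    have h0notin : (0 : F) ∉ univ.filter (fun a : F => a ^ s = 1) := by
      simp only [mem_filter, mem_univ, true_and]
      rw [zero_pow (by omega : s ≠ 0)]
      exact zero_ne_one
    rw [hfilter, Finset.sum_insert h0notin]
    have hsdvd' : s ∣ Fintype.card F - 1 := by rw [hF]; exact hsdvd
    rcases Nat.eq_zero_or_pos i with rfl | hi
    · simp only [pow_zero, Finset.sum_const, nsmul_one, aux_card F hs hsdvd']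
      obtain ⟨k, hk⟩ := hps
      have hcast : (1 : F) + ((s : ℕ) : F) = ((s + 1 : ℕ) : F) := by push_cast; ring
      rw [hcast, hk]
      push_cast
      rw [hpF]
      ring
    · have hilt : i < s := by
        rw [hjq] at hbound
        have haux : (q + 1) * (q - 1) + 1 = q ^ 2 := aux_sq q (by omega)
        have hqq : q * (s + q) = q * s + q ^ 2 := by ring
        have h4 : 4 ≤ q ^ 2 := by nlinarith
        have hlt : q * i < q * s := by omega
        exact Nat.lt_of_mul_lt_mul_left hlt
      have hnd : ¬ s ∣ i := by
        intro hdvd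
        have := Nat.le_of_dvd hi hdvd
        omega
      rw [zero_pow (by omega : i ≠ 0), aux_sum F hsdvd' hnd, add_zero]
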